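/- Let l ≥ 2, and let E be an evolution algebra over F of type [1, …, 1, n, 1, …, 1] (l ones, then n, then r ones) with natural basis {h_1, …, h_{l+n+r}} whose multiplication satisfies: h_i² = h_{i+1} + h_{i+2} for i = 1, …, l; h_{l+t}² = Σ_{j=l+n+1}^{l+n+r} α_{l+t,j} h_j for t = 1, …, n; h_{l+n+m}² = h_{l+n+m+1} + h_{l+n+m+2} for m = 1, …, r−2; h_{l+n+r−1}² = h_{l+n+r}; and h_{l+n+r}² = 0. Then E is not isomorphic to E_{lr}(U, b, u) for any n-dimensional F-vector space U, nondegenerate symmetric bilinear form b on U, and nonzero u ∈ U. -/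

import Mathlib

variable {F : Type*} [Field F] {A : Type*} [AddCommGroup A] [Module F A]

/-- For a bilinear multiplication `mul` on `A` and a submodule `S`, the preimage in `A` of the
annihilator of `A/S`, i.e. `{x | x·A ⊆ S and A·x ⊆ S}`. -/
def annSucc (mul : A →ₗ[F] A →ₗ[F] A) (S : Submodule F A) : Submodule F A where
  carrier := {x | ∀ y : A, mul x y ∈ S ∧ mul y x ∈ S}
  zero_mem' := by intro y; simp
  add_mem' := by
    intro a b ha hb y
    refine ⟨?_, ?_⟩
    · simpa [map_add, LinearMap.add_apply] using S.add_mem (ha y).1 (hb y).1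
    · simpa [map_add, LinearMap.add_apply] using S.add_mem (ha y).2 (hb y).2
  smul_mem' := by
    intro c a ha y
    refine ⟨?_, ?_⟩
    · simpa [map_smul, LinearMap.smul_apply] using S.smul_mem c (ha y).1
    · simpa [map_smul, LinearMap.smul_apply] using S.smul_mem c (ha y).2

/-- The upper annihilating series: `annSeq mul 0 = 0`, and
`annSeq mul (i+1)` is the preimage in `A` of `ann(A / annSeq mul i)`. -/
def annSeq (mul : A →ₗ[F] A →ₗ[F] A) : ℕ → Submodule F A
  | 0 => ⊥
  | i + 1 => annSucc mul (annSeq mul i)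

/-- A basis is natural if the product of distinct basis vectors vanishes. -/
def IsNaturalBasis {ι : Type*} (mul : A →ₗ[F] A →ₗ[F] A) (e : Module.Basis ι F A) : Prop :=
  ∀ i j, i ≠ j → mul (e i) (e j) = 0

/-- An evolution algebra: a commutative algebra admitting a natural basis. -/
def IsEvolutionAlgebra (mul : A →ₗ[F] A →ₗ[F] A) : Prop :=
  (∀ x y, mul x y = mul y x) ∧ ∃ (n : ℕ) (e : Module.Basis (Fin n) F A), IsNaturalBasis mul e

/-- The (nilpotent) algebra `(A, mul)` has type `[n_1, …, n_r]`:  `r` is the least index with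
`ann^r(A) = A` and `n_i = dim ann^i(A) - dim ann^{i-1}(A)`. -/
def HasType (mul : A →ₗ[F] A →ₗ[F] A) (L : List ℕ) : Prop :=
  annSeq mul L.length = ⊤ ∧ (∀ j < L.length, annSeq mul j ≠ ⊤) ∧
  ∀ (i : ℕ) (h : i < L.length),
    L.get ⟨i, h⟩ =
      Module.finrank F (annSeq mul (i + 1)) - Module.finrank F (annSeq mul i)



lemma mem_annSucc {mul : A →ₗ[F] A →ₗ[F] A} {S : Submodule F A} {x : A} :
    x ∈ annSucc mul S ↔ ∀ y, mul x y ∈ S ∧ mul y x ∈ S := Iff.rfl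

lemma annSeq_succ (mul : A →ₗ[F] A →ₗ[F] A) (k : ℕ) :
    annSeq mul (k+1) = annSucc mul (annSeq mul k) := rfl

set_option maxHeartbeats 1600000 in
set_option synthInstance.maxHeartbeats 400000 in
/-- (Here `l = a + 1 ≥ 2`, `r = d + 1`, indices 0-based.) An evolution algebra
of type `[1,…,1,n,1,…,1]` with natural basis `h_1,…,h_{l+n+r}` whose multiplication satisfies
`h_i² = h_{i+1} + h_{i+2}` for `i = 1,…,l`, `h_{l+t}² ∈ span{h_{l+n+1},…}` for `t = 1,…,n`,
`h_{l+n+m}² = h_{l+n+m+1} + h_{l+n+m+2}` for `m = 1,…,r-2`, `h_{l+n+r-1}² = h_{l+n+r}`, and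
`h_{l+n+r}² = 0`, is not isomorphic to `E_{lr}(U, b, u)` for any admissible `(U, b, u)`. -/
theorem concrete_l_ge_two_not_iso_Elr
    (F : Type*) [Field F] (h2 : (2 : F) ≠ 0)
    (a d n : ℕ) (hl : 1 ≤ a)  -- `l = a + 1 ≥ 2`
    (hn : 1 ≤ n)
    {A : Type*} [AddCommGroup A] [Module F A]
    (mulA : A →ₗ[F] A →ₗ[F] A) (hcommA : ∀ x y : A, mulA x y = mulA y x)
    (h : Module.Basis (Fin (a + 1 + n + (d + 1))) F A)
    (hnat : IsNaturalBasis mulA h)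
    (htype : HasType mulA (List.replicate (a + 1) 1 ++ n :: List.replicate (d + 1) 1))
    (hs1 : ∀ (i : Fin (a + 1 + n + (d + 1))) (hi : (i : ℕ) < a + 1),
      mulA (h i) (h i) = h ⟨(i : ℕ) + 1, by omega⟩ + h ⟨(i : ℕ) + 2, by omega⟩)
    (hs2 : ∀ i : Fin (a + 1 + n + (d + 1)), a + 1 ≤ (i : ℕ) → (i : ℕ) < a + 1 + n →
      ∀ j : Fin (a + 1 + n + (d + 1)), (j : ℕ) < a + 1 + n →
        h.repr (mulA (h i) (h i)) j = 0)
    (hs3 : ∀ (i : Fin (a + 1 + n + (d + 1))) (hi1 : a + 1 + n ≤ (i : ℕ))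
      (hi2 : (i : ℕ) + 3 ≤ a + 1 + n + (d + 1)),
      mulA (h i) (h i) = h ⟨(i : ℕ) + 1, by omega⟩ + h ⟨(i : ℕ) + 2, by omega⟩)
    (hs4 : mulA (h ⟨a + n + d, by omega⟩) (h ⟨a + n + d, by omega⟩) =
      h ⟨a + 1 + n + d, by omega⟩)
    (hs5 : mulA (h ⟨a + 1 + n + d, by omega⟩) (h ⟨a + 1 + n + d, by omega⟩) = 0) :
    ∀ (U : Type*) (_ : AddCommGroup U) (_ : Module F U),
      Module.finrank F U = n →
      ∀ b : U →ₗ[F] U →ₗ[F] F, (∀ x y : U, b x y = b y x) →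
        (∀ x : U, (∀ y : U, b x y = 0) → x = 0) →
      ∀ u : U, u ≠ 0 →
      ∀ mul' : ((Fin (a + 1) → F) × U × (Fin (d + 1) → F)) →ₗ[F]
          ((Fin (a + 1) → F) × U × (Fin (d + 1) → F)) →ₗ[F]
          ((Fin (a + 1) → F) × U × (Fin (d + 1) → F)),
        (∀ (α γ : Fin (a + 1) → F) (x y : U) (β δ : Fin (d + 1) → F),
          mul' (α, x, β) (γ, y, δ) =
            (Fin.cases (motive := fun _ => F) 0
                (fun j : Fin a => α j.castSucc * γ j.castSucc),
             (α (Fin.last a) * γ (Fin.last a)) • u,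
             Fin.cases (motive := fun _ => F) (b x y)
                (fun j : Fin d => β j.castSucc * δ j.castSucc))) →
        ¬ ∃ φ : A ≃ₗ[F] ((Fin (a + 1) → F) × U × (Fin (d + 1) → F)),
            ∀ x y, φ (mulA x y) = mul' (φ x) (φ y) := by
  intro U iU1 iU2 hUdim b hbsymm hbnd u hu mul' hmul'
  rintro ⟨φ, hφ⟩
  letI := iU1
  letI := iU2
  classical
  -- product expansion in coordinates
  have hmulrepr : ∀ x y : A, mulA x y
      = ∑ j : Fin (a+1+n+(d+1)), (h.repr x j * h.repr y j) • mulA (h j) (h j) := by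
    intro x y
    conv_lhs => rw [← h.sum_repr x, ← h.sum_repr y]
    rw [map_sum]
    refine Finset.sum_congr rfl fun j _ => ?_
    rw [map_smul, map_sum, LinearMap.sum_apply,
      Finset.sum_eq_single j (fun i _ hi => by
        rw [map_smul, LinearMap.smul_apply, hnat i j hi, smul_zero])
      (fun hj => absurd (Finset.mem_univ j) hj),
      map_smul, LinearMap.smul_apply, smul_smul, mul_comm]
  have hcoord : ∀ (x y : A) (k : Fin (a+1+n+(d+1))), h.repr (mulA x y) k
      = ∑ j : Fin (a+1+n+(d+1)),
          (h.repr x j * h.repr y j) * h.repr (mulA (h j) (h j)) k := by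
    intro x y k
    rw [hmulrepr x y, map_sum, Finsupp.finset_sum_apply]
    refine Finset.sum_congr rfl fun j _ => ?_
    rw [map_smul, Finsupp.smul_apply, smul_eq_mul]
  have hmulbasis : ∀ (j : Fin (a+1+n+(d+1))) (y : A),
      mulA (h j) y = h.repr y j • mulA (h j) (h j) := by
    intro j y
    rw [hmulrepr,
      Finset.sum_eq_single j (fun i _ hi => by
        simp [Module.Basis.repr_self, Finsupp.single_eq_of_ne hi])
      (fun hj => absurd (Finset.mem_univ j) hj)]
    simp [Module.Basis.repr_self]
  have hmemsucc : ∀ (S : Submodule F A) (j : Fin (a+1+n+(d+1))),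
      mulA (h j) (h j) ∈ S → h j ∈ annSucc mulA S := by
    intro S j hq
    refine mem_annSucc.mpr fun y => ⟨?_, ?_⟩
    · rw [hmulbasis]; exact S.smul_mem _ hq
    · rw [← hcommA, hmulbasis]; exact S.smul_mem _ hq
  -- coordinates of the squares
  have hq1 : ∀ (j k : Fin (a+1+n+(d+1))), (j:ℕ) < a + 1 →
      h.repr (mulA (h j) (h j)) k
        = (if (j:ℕ)+1 = (k:ℕ) then 1 else 0) + (if (j:ℕ)+2 = (k:ℕ) then 1 else 0) := by
    intro j k hj
    rw [hs1 j hj, map_add]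
    simp [Module.Basis.repr_self, Finsupp.single_apply, Fin.ext_iff]
  have hqlast : ∀ (j k : Fin (a+1+n+(d+1))), a+1+n ≤ (j:ℕ) → (k:ℕ) < a+n+2 →
      h.repr (mulA (h j) (h j)) k = 0 := by
    intro j k hj hk
    by_cases h3 : (j:ℕ) + 3 ≤ a+1+n+(d+1)
    · rw [hs3 j hj h3, map_add]
      simp [Module.Basis.repr_self, Finsupp.single_apply, Fin.ext_iff,
        show ¬((j:ℕ)+1 = (k:ℕ)) by omega, show ¬((j:ℕ)+2 = (k:ℕ)) by omega]
    · by_cases h4 : (j:ℕ) = a+n+d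
      · have hje : j = ⟨a+n+d, by omega⟩ := Fin.ext h4
        rw [hje, hs4]
        simp [Module.Basis.repr_self, Finsupp.single_apply, Fin.ext_iff,
          show ¬(a+1+n+d = (k:ℕ)) by omega]
      · have hje : j = ⟨a+1+n+d, by omega⟩ := Fin.ext (show (j:ℕ) = a+1+n+d by have := j.isLt; omega)
        rw [hje, hs5]; simp
  have hqfz : ∀ (j k : Fin (a+1+n+(d+1))), (j:ℕ) < a+1 →
      (j:ℕ)+1 ≠ (k:ℕ) → (j:ℕ)+2 ≠ (k:ℕ) → h.repr (mulA (h j) (h j)) k = 0 := by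
    intro j k hj hk1 hk2
    rw [hq1 j k hj, if_neg hk1, if_neg hk2, add_zero]
  have hqz : ∀ (j k : Fin (a+1+n+(d+1))), (k:ℕ) < a+1+n →
      ((j:ℕ) < a+1 → (j:ℕ)+1 ≠ (k:ℕ) ∧ (j:ℕ)+2 ≠ (k:ℕ)) →
      h.repr (mulA (h j) (h j)) k = 0 := by
    intro j k hk hcond
    rcases lt_or_ge (j:ℕ) (a+1) with hj | hj
    · exact hqfz j k hj (hcond hj).1 (hcond hj).2
    rcases lt_or_ge (j:ℕ) (a+1+n) with hj2 | hj2
    · exact hs2 j hj hj2 k hk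
    · exact hqlast j k hj2 (by omega)
  have hQnum : ∀ (jm km : ℕ) (hjm : jm < a+1) (hkm : km < a+1+n+(d+1)),
      h.repr (mulA (h ⟨jm, by omega⟩) (h ⟨jm, by omega⟩)) ⟨km, hkm⟩
        = (if jm+1 = km then 1 else 0) + (if jm+2 = km then 1 else 0) := by
    intro jm km hjm hkm
    exact hq1 _ _ hjm
  have hQ01 : h.repr (mulA (h ⟨0, by omega⟩) (h ⟨0, by omega⟩)) ⟨1, by omega⟩ = 1 := by
    rw [hQnum 0 1 (by omega) (by omega)]; norm_num
  have hQ02 : h.repr (mulA (h ⟨0, by omega⟩) (h ⟨0, by omega⟩)) ⟨2, by omega⟩ = 1 := by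
    rw [hQnum 0 2 (by omega) (by omega)]; norm_num
  have hQ12 : h.repr (mulA (h ⟨1, by omega⟩) (h ⟨1, by omega⟩)) ⟨2, by omega⟩ = 1 := by
    rw [hQnum 1 2 (by omega) (by omega)]; norm_num

  have hqsum : ∀ (j : Fin (a+1+n+(d+1))),
      mulA (h j) (h j) = ∑ i : Fin (a+1+n+(d+1)), h.repr (mulA (h j) (h j)) i • h i :=
    fun j => (h.sum_repr _).symm
  have hEnter : ∀ (k : ℕ) (m : ℕ) (hm : m < a+1+n+(d+1)),
      ((a+1+n ≤ m ∧ a+1+n+(d+1) ≤ m + k) ∨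
       (a+1 ≤ m ∧ m < a+1+n ∧ d+2 ≤ k) ∨
       (m < a+1 ∧ a+d+3 ≤ m + k)) → h ⟨m, hm⟩ ∈ annSeq mulA k := by
    intro k
    induction k with
    | zero => intro m hm hj; exfalso; omega
    | succ k ih =>
      intro m hm hj
      rw [annSeq_succ]
      apply hmemsucc
      by_cases hlast : a+1+n ≤ m
      · by_cases h5 : m = a+1+n+d
        · have hje : (⟨m, hm⟩ : Fin (a+1+n+(d+1))) = ⟨a+1+n+d, by omega⟩ := Fin.ext h5
          rw [hje, hs5]; exact zero_mem _
        · by_cases h4 : m = a+n+d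
          · have hje : (⟨m, hm⟩ : Fin (a+1+n+(d+1))) = ⟨a+n+d, by omega⟩ := Fin.ext h4
            rw [hje, hs4]
            exact ih (a+1+n+d) (by omega) (by left; constructor <;> omega)
          · have h3 : (m : ℕ) + 3 ≤ a+1+n+(d+1) := by omega
            rw [hs3 ⟨m, hm⟩ hlast h3]
            exact add_mem (ih (m+1) (by omega) (by left; constructor <;> omega))
              (ih (m+2) (by omega) (by left; constructor <;> omega))
      · by_cases hmid : a+1 ≤ m
        · have hk : d+1 ≤ k := by omega
          rw [hqsum ⟨m, hm⟩]
          apply Submodule.sum_mem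
          intro i _
          by_cases hi : (i:ℕ) < a+1+n
          · rw [hs2 ⟨m, hm⟩ hmid (show m < a+1+n by omega) i hi, zero_smul]; exact zero_mem _
          · refine Submodule.smul_mem _ _ ?_
            have : h i ∈ annSeq mulA k := by
              have := ih (i:ℕ) i.isLt (by left; constructor <;> omega)
              simpa using this
            exact this
        · have hjf : m < a+1 := by omega
          have hcond : a+d+3 ≤ m + (k+1) := by
            rcases hj with ⟨hc,-⟩|⟨hc,-⟩|⟨-,hc⟩ <;> omega
          rw [hs1 ⟨m, hm⟩ hjf]
          refine add_mem (ih (m+1) (by omega) (by omega)) (ih (m+2) (by omega) (by omega))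

  -- mul' on pairs
  have hm : ∀ p w : (Fin (a+1) → F) × U × (Fin (d+1) → F),
      mul' p w = (Fin.cases (motive := fun _ => F) 0
          (fun j : Fin a => p.1 j.castSucc * w.1 j.castSucc),
        (p.1 (Fin.last a) * w.1 (Fin.last a)) • u,
        Fin.cases (motive := fun _ => F) (b p.2.1 w.2.1)
          (fun j : Fin d => p.2.2 j.castSucc * w.2.2 j.castSucc)) :=
    fun p w => hmul' p.1 w.1 p.2.1 w.2.1 p.2.2 w.2.2
  -- upper bound for the annihilator chain on the E side
  have hUB : ∀ (k : ℕ) (p : (Fin (a+1) → F) × U × (Fin (d+1) → F)),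
      p ∈ annSeq mul' k →
      (∀ i : Fin (a+1), (i:ℕ) + k < a+d+3 → p.1 i = 0) ∧
      (k ≤ d+1 → p.2.1 = 0) ∧
      (∀ j : Fin (d+1), (j:ℕ) + k < d+1 → p.2.2 j = 0) := by
    intro k
    induction k with
    | zero =>
      intro p hp
      have hp0 : p = 0 := by simpa [annSeq] using hp
      refine ⟨?_, ?_, ?_⟩ <;> simp [hp0]
    | succ k ih =>
      intro p hp
      have hp' : ∀ w, mul' p w ∈ annSeq mul' k := fun w => (mem_annSucc.mp hp w).1
      refine ⟨?_, ?_, ?_⟩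
      · intro i hi
        by_cases hia : (i:ℕ) < a
        · have h0 := (ih _ (hp' (Pi.single i 1, 0, 0))).1 ⟨(i:ℕ)+1, by omega⟩
            (show (i:ℕ)+1+k < a+d+3 by omega)
          rw [hm] at h0
          dsimp only at h0
          rw [show (⟨(i:ℕ)+1, by omega⟩ : Fin (a+1)) = Fin.succ ⟨(i:ℕ), hia⟩ from rfl,
            Fin.cases_succ] at h0
          rw [show ((⟨(i:ℕ), hia⟩ : Fin a).castSucc) = i from Fin.ext rfl,
            Pi.single_eq_same, mul_one] at h0
          exact h0
        · have hia' : i = Fin.last a := Fin.ext (by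
            have := i.isLt
            simp only [Fin.val_last]; omega)
          have h0 := (ih _ (hp' (Pi.single i 1, 0, 0))).2.1 (by omega)
          rw [hm] at h0
          dsimp only at h0
          rw [← hia', Pi.single_eq_same] at h0
          have h1 := (smul_eq_zero.mp h0).resolve_right hu
          rw [mul_one] at h1
          exact h1
      · intro hk1
        apply hbnd
        intro y
        have h0 := (ih _ (hp' (0, y, 0))).2.2 ⟨0, by omega⟩
          (show (0:ℕ)+k < d+1 by omega)
        rw [hm] at h0
        simpa using h0
      · intro j hj
        have hjd : (j:ℕ) < d := by omega
        have h0 := (ih _ (hp' (0, 0, Pi.single j 1))).2.2 ⟨(j:ℕ)+1, by omega⟩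
          (show (j:ℕ)+1+k < d+1 by omega)
        rw [hm] at h0
        dsimp only at h0
        rw [show (⟨(j:ℕ)+1, by omega⟩ : Fin (d+1)) = Fin.succ ⟨(j:ℕ), hjd⟩ from rfl,
          Fin.cases_succ] at h0
        rw [show ((⟨(j:ℕ), hjd⟩ : Fin d).castSucc) = j from Fin.ext rfl,
          Pi.single_eq_same, mul_one] at h0
        exact h0

  haveI : FiniteDimensional F A := Module.Finite.of_basis h
  haveI : FiniteDimensional F U := Module.finite_of_finrank_pos (by rw [hUdim]; omega)
  -- transport of the annihilator chain along the isomorphism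
  have hiso : ∀ (k : ℕ) (v : A), v ∈ annSeq mulA k ↔ φ v ∈ annSeq mul' k := by
    intro k
    induction k with
    | zero =>
      intro v
      simp only [annSeq, Submodule.mem_bot]
      exact ⟨fun hv => by rw [hv, map_zero], fun hv => by
        have := congrArg φ.symm hv
        simpa using this⟩
    | succ k ih =>
      intro v
      constructor
      · intro hv
        refine mem_annSucc.mpr fun w => ?_
        obtain ⟨y, rfl⟩ := φ.surjective w
        rw [← hφ v y, ← hφ y v]
        exact ⟨(ih _).mp (mem_annSucc.mp hv y).1, (ih _).mp (mem_annSucc.mp hv y).2⟩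
      · intro hv
        refine mem_annSucc.mpr fun y => ?_
        have h2' := mem_annSucc.mp hv (φ y)
        rw [← hφ v y, ← hφ y v] at h2'
        exact ⟨(ih _).mpr h2'.1, (ih _).mpr h2'.2⟩
  have hmap : ∀ k, (annSeq mulA k).map (φ : A →ₗ[F] (Fin (a+1) → F) × U × (Fin (d+1) → F))
      = annSeq mul' k := by
    intro k
    ext w
    rw [Submodule.mem_map]
    constructor
    · rintro ⟨v, hv, rfl⟩; exact (hiso k v).mp hv
    · intro hw
      exact ⟨φ.symm w, (hiso k _).mpr (by rwa [LinearEquiv.apply_symm_apply]), by simp⟩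
  have hfr : ∀ k, Module.finrank F (annSeq mul' k) = Module.finrank F (annSeq mulA k) := by
    intro k
    rw [← hmap k, LinearEquiv.finrank_map_eq]
  -- the distinguished element x = φ⁻¹ f₁
  have hf1notin :
      ((Pi.single 0 1, 0, 0) : (Fin (a+1) → F) × U × (Fin (d+1) → F))
        ∉ annSeq mul' (a+d+2) := by
    intro hmem
    have h0 := (hUB _ _ hmem).1 0 (show (0:ℕ) + (a+d+2) < a+d+3 by omega)
    rw [show ((Pi.single 0 1, 0, 0) : (Fin (a+1) → F) × U × (Fin (d+1) → F)).1 = Pi.single 0 1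
      from rfl, Pi.single_eq_same] at h0
    exact one_ne_zero h0
  have hxnot : φ.symm (Pi.single 0 1, 0, 0) ∉ annSeq mulA (a+d+2) := by
    intro hcmem
    have := (hiso _ _).mp hcmem
    rw [LinearEquiv.apply_symm_apply] at this
    exact hf1notin this
  have hc0 : h.repr (φ.symm (Pi.single 0 1, 0, 0)) ⟨0, by omega⟩ ≠ 0 := by
    intro hc
    apply hxnot
    rw [← h.sum_repr (φ.symm (Pi.single 0 1, 0, 0))]
    apply Submodule.sum_mem
    intro j _
    by_cases hj0 : (j:ℕ) = 0
    · have hje : j = ⟨0, by omega⟩ := Fin.ext hj0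
      rw [hje, hc, zero_smul]; exact zero_mem _
    · refine Submodule.smul_mem _ _ ?_
      have hmem := hEnter (a+d+2) (j:ℕ) j.isLt (by have := j.isLt; omega)
      simpa using hmem

  set f1 : (Fin (a+1) → F) × U × (Fin (d+1) → F) := (Pi.single 0 1, 0, 0) with hf1def
  have hlastne : (Fin.last a) ≠ (0 : Fin (a+1)) := by
    simp only [ne_eq, Fin.ext_iff, Fin.val_last, Fin.val_zero]
    omega
  have hf10 : f1.1 (Fin.last a) = 0 := Pi.single_eq_of_ne hlastne 1
  set f2v := mul' f1 f1 with hf2vdef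
  have hf2v1 : f2v.1 = Fin.cases 0 (fun j : Fin a => f1.1 j.castSucc * f1.1 j.castSucc) := by
    rw [hf2vdef, hm]
  have hf2v10 : f2v.1 0 = 0 := by rw [hf2v1]; simp only [Fin.cases_zero]
  have hf2v1succ : ∀ j : Fin a, f2v.1 j.succ = f1.1 j.castSucc * f1.1 j.castSucc := by
    intro j; rw [hf2v1]; simp only [Fin.cases_succ]
  have hf2vu : f2v.2.1 = 0 := by
    rw [hf2vdef, hm]
    show (f1.1 (Fin.last a) * f1.1 (Fin.last a)) • u = 0
    rw [hf10, zero_mul, zero_smul]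
  have hf2v2 : f2v.2.2 = 0 := by
    rw [hf2vdef, hm]
    show (Fin.cases (motive := fun _ => F) (b f1.2.1 f1.2.1)
      (fun j : Fin d => f1.2.2 j.castSucc * f1.2.2 j.castSucc)) = 0
    funext t
    refine t.cases ?_ ?_
    · simp [hf1def]
    · intro j; simp [hf1def]
  have hD : ∀ t : Fin (a+1), f1.1 t * f2v.1 t = 0 := by
    intro t
    refine t.cases ?_ ?_
    · rw [hf2v10, mul_zero]
    · intro j
      rw [show f1.1 j.succ = 0 from Pi.single_eq_of_ne (Fin.succ_ne_zero j) 1, zero_mul]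
  have hrel1E : mul' f1 f2v = 0 := by
    rw [hm]
    have c1 : (Fin.cases (motive := fun _ => F) 0
        (fun j : Fin a => f1.1 j.castSucc * f2v.1 j.castSucc)) = (fun _ => (0:F)) := by
      funext t
      refine t.cases ?_ ?_
      · simp only [Fin.cases_zero]
      · intro j; simp only [Fin.cases_succ]; rw [hD]
    have c3 : (Fin.cases (motive := fun _ => F) (b f1.2.1 f2v.2.1)
        (fun j : Fin d => f1.2.2 j.castSucc * f2v.2.2 j.castSucc)) = (fun _ => (0:F)) := by
      funext t
      refine t.cases ?_ ?_
      · simp [hf1def]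
      · intro j; simp [hf1def]
    rw [c1, c3, hD (Fin.last a), zero_smul]
    rfl
  set f3v := mul' f2v f2v with hf3vdef
  have hf3v10 : f3v.1 0 = 0 := by
    rw [hf3vdef, hm]
    show (Fin.cases (motive := fun _ => F) 0
      (fun j : Fin a => f2v.1 j.castSucc * f2v.1 j.castSucc)) 0 = 0
    simp only [Fin.cases_zero]
  have hf3v1succ : ∀ j : Fin a, f3v.1 j.succ = f2v.1 j.castSucc * f2v.1 j.castSucc := by
    intro j
    rw [hf3vdef, hm]
    show (Fin.cases (motive := fun _ => F) 0
      (fun j : Fin a => f2v.1 j.castSucc * f2v.1 j.castSucc)) j.succ = _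
    simp only [Fin.cases_succ]
  have hE : ∀ t : Fin (a+1), f2v.1 t * f3v.1 t = 0 := by
    intro t
    refine t.cases ?_ ?_
    · rw [hf2v10, zero_mul]
    · intro j
      by_cases hj : j.castSucc = (0 : Fin (a+1))
      · rw [hf3v1succ, hj, hf2v10, mul_zero, mul_zero]
      · rw [hf2v1succ, show f1.1 j.castSucc = 0 from Pi.single_eq_of_ne hj 1, zero_mul, zero_mul]
  have hrel2E : mul' f2v f3v = 0 := by
    rw [hm]
    have c1 : (Fin.cases (motive := fun _ => F) 0
        (fun j : Fin a => f2v.1 j.castSucc * f3v.1 j.castSucc)) = (fun _ => (0:F)) := by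
      funext t
      refine t.cases ?_ ?_
      · simp only [Fin.cases_zero]
      · intro j; simp only [Fin.cases_succ]; rw [hE]
    have c3 : (Fin.cases (motive := fun _ => F) (b f2v.2.1 f3v.2.1)
        (fun j : Fin d => f2v.2.2 j.castSucc * f3v.2.2 j.castSucc)) = (fun _ => (0:F)) := by
      funext t
      refine t.cases ?_ ?_
      · simp only [Fin.cases_zero]
        rw [hf2vu, map_zero, LinearMap.zero_apply]
      · intro j; simp only [Fin.cases_succ]
        rw [hf2v2, Pi.zero_apply, zero_mul]
    rw [c1, c3, hE (Fin.last a), zero_smul]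
    rfl
  -- pull back the relations
  have hφx : φ (φ.symm f1) = f1 := φ.apply_symm_apply f1
  have hφz : φ (mulA (φ.symm f1) (φ.symm f1)) = f2v := by rw [hφ, hφx, hf2vdef]
  have hREL1 : mulA (φ.symm f1) (mulA (φ.symm f1) (φ.symm f1)) = 0 := by
    apply φ.map_eq_zero_iff.mp
    rw [hφ, hφx, hφz, hrel1E]
  have hREL2 : mulA (mulA (φ.symm f1) (φ.symm f1))
      (mulA (mulA (φ.symm f1) (φ.symm f1)) (mulA (φ.symm f1) (φ.symm f1))) = 0 := by
    apply φ.map_eq_zero_iff.mp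
    rw [hφ, hφz, hφ, hφz, ← hf3vdef, hrel2E]

  set x0 := φ.symm f1 with hx0def
  set z0 := mulA x0 x0 with hz0def
  have hsum2 : ∀ (g : Fin (a+1+n+(d+1)) → F) (j0 j1 : Fin (a+1+n+(d+1))), j0 ≠ j1 →
      (∀ j, j ≠ j0 → j ≠ j1 → g j = 0) → ∑ j, g j = g j0 + g j1 := by
    intro g j0 j1 hne hz
    calc ∑ j, g j = ∑ j ∈ ({j0, j1} : Finset _), g j := by
          refine (Finset.sum_subset (Finset.subset_univ _) ?_).symm
          intro j _ hj
          simp only [Finset.mem_insert, Finset.mem_singleton, not_or] at hj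
          exact hz j hj.1 hj.2
      _ = g j0 + g j1 := Finset.sum_pair hne
  have hZ0 : h.repr z0 ⟨0, by omega⟩ = 0 := by
    rw [hz0def, hcoord]
    apply Finset.sum_eq_zero
    intro j _
    rw [hqz j ⟨0, by omega⟩ (show (0:ℕ) < a+1+n by omega)
      (fun hjf => ⟨(by omega : (j:ℕ)+1 ≠ 0), (by omega : (j:ℕ)+2 ≠ 0)⟩), mul_zero]
  have hZ1 : h.repr z0 ⟨1, by omega⟩ = h.repr x0 ⟨0, by omega⟩ * h.repr x0 ⟨0, by omega⟩ := by
    rw [hz0def, hcoord]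
    rw [Finset.sum_eq_single (⟨0, by omega⟩ : Fin (a+1+n+(d+1)))
      (fun j _ hj => by
        have hjv : (j:ℕ) ≠ 0 := fun e => hj (Fin.ext e)
        rw [hqz j ⟨1, by omega⟩ (show (1:ℕ) < a+1+n by omega)
          (fun hjf => ⟨(by omega : (j:ℕ)+1 ≠ 1), (by omega : (j:ℕ)+2 ≠ 1)⟩), mul_zero])
      (fun habs => absurd (Finset.mem_univ _) habs)]
    rw [hQ01, mul_one]
  have e1 : h.repr (mulA x0 z0) ⟨2, by omega⟩ = 0 := by rw [hz0def, hREL1]; simp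
  rw [hcoord] at e1
  rw [hsum2 _ ⟨0, by omega⟩ ⟨1, by omega⟩ (Fin.ne_of_val_ne (by omega : (0:ℕ) ≠ 1))
    (fun j hj0 hj1 => by
      have hv0 : (j:ℕ) ≠ 0 := fun e => hj0 (Fin.ext e)
      have hv1 : (j:ℕ) ≠ 1 := fun e => hj1 (Fin.ext e)
      rw [hqz j ⟨2, by omega⟩ (show (2:ℕ) < a+1+n by omega)
        (fun hjf => ⟨(by omega : (j:ℕ)+1 ≠ 2), (by omega : (j:ℕ)+2 ≠ 2)⟩), mul_zero])] at e1
  rw [hQ02, hQ12, hZ0, hZ1, mul_zero, zero_mul, zero_add, mul_one] at e1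
  have hc1 : h.repr x0 ⟨1, by omega⟩ = 0 := by
    rcases mul_eq_zero.mp e1 with h' | h'
    · exact h'
    · exact absurd h' (mul_ne_zero hc0 hc0)
  have hZ2 : h.repr z0 ⟨2, by omega⟩ = h.repr x0 ⟨0, by omega⟩ * h.repr x0 ⟨0, by omega⟩ := by
    rw [hz0def, hcoord]
    rw [hsum2 _ ⟨0, by omega⟩ ⟨1, by omega⟩ (Fin.ne_of_val_ne (by omega : (0:ℕ) ≠ 1))
      (fun j hj0 hj1 => by
        have hv0 : (j:ℕ) ≠ 0 := fun e => hj0 (Fin.ext e)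
        have hv1 : (j:ℕ) ≠ 1 := fun e => hj1 (Fin.ext e)
        rw [hqz j ⟨2, by omega⟩ (show (2:ℕ) < a+1+n by omega)
          (fun hjf => ⟨(by omega : (j:ℕ)+1 ≠ 2), (by omega : (j:ℕ)+2 ≠ 2)⟩), mul_zero])]
    rw [hQ02, hQ12, hc1]
    ring
  have hV1 : h.repr (mulA z0 z0) ⟨1, by omega⟩ = 0 := by
    rw [hcoord]
    apply Finset.sum_eq_zero
    intro j _
    by_cases hj0 : j = ⟨0, by omega⟩
    · rw [hj0, hZ0]; ring
    · have hjv : (j:ℕ) ≠ 0 := fun e => hj0 (Fin.ext e)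
      rw [hqz j ⟨1, by omega⟩ (show (1:ℕ) < a+1+n by omega)
        (fun hjf => ⟨(by omega : (j:ℕ)+1 ≠ 1), (by omega : (j:ℕ)+2 ≠ 1)⟩), mul_zero]
  have hV2 : h.repr (mulA z0 z0) ⟨2, by omega⟩
      = (h.repr x0 ⟨0, by omega⟩ * h.repr x0 ⟨0, by omega⟩)
        * (h.repr x0 ⟨0, by omega⟩ * h.repr x0 ⟨0, by omega⟩) := by
    rw [hcoord]
    rw [hsum2 _ ⟨0, by omega⟩ ⟨1, by omega⟩ (Fin.ne_of_val_ne (by omega : (0:ℕ) ≠ 1))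
      (fun j hj0 hj1 => by
        have hv0 : (j:ℕ) ≠ 0 := fun e => hj0 (Fin.ext e)
        have hv1 : (j:ℕ) ≠ 1 := fun e => hj1 (Fin.ext e)
        rw [hqz j ⟨2, by omega⟩ (show (2:ℕ) < a+1+n by omega)
          (fun hjf => ⟨(by omega : (j:ℕ)+1 ≠ 2), (by omega : (j:ℕ)+2 ≠ 2)⟩), mul_zero])]
    rw [hQ02, hQ12, hZ0, hZ1]
    ring

  by_cases ha2 : 2 ≤ a
  · -- Case l ≥ 3 : contradiction from the coefficient of h₃ in z·z²
    have hQ13 : h.repr (mulA (h ⟨1, by omega⟩) (h ⟨1, by omega⟩)) ⟨3, by omega⟩ = 1 := by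
      rw [hQnum 1 3 (by omega) (by omega)]; norm_num
    have hQ23 : h.repr (mulA (h ⟨2, by omega⟩) (h ⟨2, by omega⟩)) ⟨3, by omega⟩ = 1 := by
      rw [hQnum 2 3 (by omega) (by omega)]; norm_num
    have e2 : h.repr (mulA z0 (mulA z0 z0)) ⟨3, by omega⟩ = 0 := by rw [hREL2]; simp
    rw [hcoord] at e2
    rw [hsum2 _ ⟨1, by omega⟩ ⟨2, by omega⟩ (Fin.ne_of_val_ne (by omega : ¬((1:ℕ) = 2)))
      (fun j hj1 hj2 => by
        have hv1 : (j:ℕ) ≠ 1 := fun e => hj1 (Fin.ext e)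
        have hv2 : (j:ℕ) ≠ 2 := fun e => hj2 (Fin.ext e)
        rw [hqz j ⟨3, by omega⟩ (show (3:ℕ) < a+1+n by omega)
          (fun hjf => ⟨(by omega : (j:ℕ)+1 ≠ 3), (by omega : (j:ℕ)+2 ≠ 3)⟩), mul_zero])] at e2
    rw [hQ13, hQ23, hV1, hZ2, hV2, mul_zero, zero_mul, zero_add, mul_one] at e2
    exact absurd e2 (mul_ne_zero (mul_ne_zero hc0 hc0)
      (mul_ne_zero (mul_ne_zero hc0 hc0) (mul_ne_zero hc0 hc0)))
  · -- Case l = 2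
    have ha1 : a = 1 := by omega
    have e2 : h.repr (mulA z0 (mulA z0 z0)) ⟨a+1+n, by omega⟩ = 0 := by rw [hREL2]; simp
    rw [hcoord] at e2
    rw [Finset.sum_eq_single (⟨2, by omega⟩ : Fin (a+1+n+(d+1)))
      (fun j _ hj => by
        have hv2 : (j:ℕ) ≠ 2 := fun e => hj (Fin.ext e)
        by_cases hjf : (j:ℕ) < a+1
        · by_cases hj1 : (j:ℕ) = 1
          · have hje : j = ⟨1, by omega⟩ := Fin.ext hj1
            rw [hje, hV1]; ring
          · rw [hqfz j ⟨a+1+n, by omega⟩ hjf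
              ((by omega : (j:ℕ)+1 ≠ a+1+n)) ((by omega : (j:ℕ)+2 ≠ a+1+n)), mul_zero]
        · by_cases hjm : (j:ℕ) < a+1+n
          · have hj3 : 3 ≤ (j:ℕ) := by omega
            have hZj : h.repr z0 j = 0 := by
              rw [hz0def, hcoord]
              apply Finset.sum_eq_zero
              intro i _
              by_cases hi1 : (i:ℕ) = 1
              · have hie : i = ⟨1, by omega⟩ := Fin.ext hi1
                rw [hie, hc1]; ring
              · rw [hqz i j hjm
                  (fun hif => ⟨(by omega : (i:ℕ)+1 ≠ (j:ℕ)), (by omega : (i:ℕ)+2 ≠ (j:ℕ))⟩),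
                  mul_zero]
            rw [hZj]; ring
          · rw [hqlast j ⟨a+1+n, by omega⟩ (by omega) ((by omega : a+1+n < a+n+2)), mul_zero])
      (fun habs => absurd (Finset.mem_univ _) habs)] at e2
    rw [hZ2, hV2] at e2
    have hQ2p : h.repr (mulA (h ⟨2, by omega⟩) (h ⟨2, by omega⟩)) ⟨a+1+n, by omega⟩ = 0 := by
      rcases mul_eq_zero.mp e2 with h' | h'
      · exact absurd h' (mul_ne_zero (mul_ne_zero hc0 hc0)
          (mul_ne_zero (mul_ne_zero hc0 hc0) (mul_ne_zero hc0 hc0)))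
      · exact h'
    have hq2mem : mulA (h ⟨2, by omega⟩) (h ⟨2, by omega⟩) ∈ annSeq mulA d := by
      rw [hqsum ⟨2, by omega⟩]
      apply Submodule.sum_mem
      intro i _
      by_cases hi : (i:ℕ) < a+1+n
      · rw [hs2 ⟨2, by omega⟩ ((by omega : a+1 ≤ 2)) ((by omega : 2 < a+1+n)) i hi, zero_smul]
        exact zero_mem _
      · by_cases hip : (i:ℕ) = a+1+n
        · have hie : i = ⟨a+1+n, by omega⟩ := Fin.ext hip
          rw [hie, hQ2p, zero_smul]; exact zero_mem _
        · refine Submodule.smul_mem _ _ ?_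
          have hmem := hEnter d (i:ℕ) i.isLt (by have := i.isLt; omega)
          simpa using hmem
    have h2mem : h ⟨2, by omega⟩ ∈ annSeq mulA (d+1) := by
      rw [annSeq_succ]; exact hmemsucc _ _ hq2mem
    -- lower bound for dim ann^{d+1} on the A side
    set ι : Fin (d+2) → Fin (a+1+n+(d+1)) :=
      (fun t => if (t:ℕ) = 0 then ⟨2, by omega⟩ else ⟨a+n+(t:ℕ), by have := t.isLt; omega⟩)
      with hιdef
    have hιinj : Function.Injective ι := by
      intro s t hst
      have hv : ((ι s : Fin (a+1+n+(d+1))) : ℕ) = ((ι t : Fin (a+1+n+(d+1))) : ℕ) :=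
        congrArg Fin.val hst
      by_cases hs : (s:ℕ) = 0 <;> by_cases ht : (t:ℕ) = 0
      · exact Fin.ext (by omega)
      · exfalso; simp only [hιdef, hs, ht, eq_self_iff_true, if_true, ↓reduceIte, Fin.val_mk] at hv; omega
      · exfalso; simp only [hιdef, hs, ht, eq_self_iff_true, if_true, ↓reduceIte, Fin.val_mk] at hv; omega
      · refine Fin.ext ?_
        simp only [hιdef, hs, ht, eq_self_iff_true, if_true, ↓reduceIte, Fin.val_mk] at hv
        omega
    have hli : LinearIndependent F (fun t : Fin (d+2) => h (ι t)) :=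
      h.linearIndependent.comp ι hιinj
    have hsple : Submodule.span F (Set.range fun t : Fin (d+2) => h (ι t))
        ≤ annSeq mulA (d+1) := by
      rw [Submodule.span_le]
      rintro w ⟨t, rfl⟩
      show h (ι t) ∈ annSeq mulA (d+1)
      by_cases ht : (t:ℕ) = 0
      · have hιt : ι t = ⟨2, by omega⟩ := by simp only [hιdef, ht, eq_self_iff_true, if_true, ↓reduceIte]
        rw [hιt]; exact h2mem
      · have hιt : ι t = ⟨a+n+(t:ℕ), by have := t.isLt; omega⟩ := by simp only [hιdef, ht, eq_self_iff_true, if_true, ↓reduceIte]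
        rw [hιt]
        exact hEnter (d+1) (a+n+(t:ℕ)) (by have := t.isLt; omega)
          (by left; refine ⟨by omega, by omega⟩)
    have hlowA : d+2 ≤ Module.finrank F (annSeq mulA (d+1)) := by
      have hle2 := Submodule.finrank_mono hsple
      rw [finrank_span_eq_card hli] at hle2
      simpa using hle2
    -- upper bound for dim ann^{d+1} on the E side
    have hupE' : annSeq mul' (d+1) ≤ Submodule.span F (Set.range
        (fun jj : Fin (d+1) =>
          ((0, 0, Pi.single jj 1) : (Fin (a+1) → F) × U × (Fin (d+1) → F)))) := by
      intro p hp
      obtain ⟨hα, hxu, hβ⟩ := hUB (d+1) p hp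
      have hA0 : p.1 = 0 := funext fun i => hα i (by have := i.isLt; omega)
      have hU0 : p.2.1 = 0 := hxu le_rfl
      have hps : p = ∑ jj : Fin (d+1), p.2.2 jj •
          ((0, 0, Pi.single jj 1) : (Fin (a+1) → F) × U × (Fin (d+1) → F)) := by
        have h3 : (∑ jj : Fin (d+1), p.2.2 jj •
            ((0, 0, Pi.single jj 1) : (Fin (a+1) → F) × U × (Fin (d+1) → F)))
            = ((0 : Fin (a+1) → F), (0:U), ∑ jj : Fin (d+1), p.2.2 jj • (Pi.single jj (1:F) : Fin (d+1) → F)) := by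
          refine Prod.ext ?_ (Prod.ext ?_ ?_)
          · rw [Prod.fst_sum]; simp
          · rw [Prod.snd_sum, Prod.fst_sum]; simp
          · rw [Prod.snd_sum, Prod.snd_sum]; simp
        rw [h3]
        refine Prod.ext ?_ (Prod.ext ?_ ?_)
        · exact hA0
        · exact hU0
        · funext v
          rw [show (((0 : Fin (a+1) → F), (0:U),
              ∑ jj : Fin (d+1), p.2.2 jj • (Pi.single jj (1:F) : Fin (d+1) → F))).2.2
            = ∑ jj : Fin (d+1), p.2.2 jj • (Pi.single jj (1:F) : Fin (d+1) → F) from rfl]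
          rw [Finset.sum_apply]
          rw [Finset.sum_eq_single v (fun jj _ hjj => by
              rw [Pi.smul_apply, Pi.single_eq_of_ne (Ne.symm hjj), smul_zero])
            (fun hv => absurd (Finset.mem_univ _) hv)]
          rw [Pi.smul_apply, Pi.single_eq_same, smul_eq_mul, mul_one]
      rw [hps]
      exact Submodule.sum_mem _ fun jj _ =>
        Submodule.smul_mem _ _ (Submodule.subset_span ⟨jj, rfl⟩)
    have hupE : Module.finrank F (annSeq mul' (d+1)) ≤ d+1 := by
      refine (Submodule.finrank_mono hupE').trans ?_
      refine (finrank_span_le_card _).trans ?_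
      rw [Set.toFinset_range]
      refine (Finset.card_image_le).trans ?_
      simp
    have hfrd := hfr (d+1)
    omega
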